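/- No F_σ filter F on ω admits an injective F-convergent sequence in βω: if F is a filter on ω that is an F_σ subset of 2^ω, then there is no injective sequence (x_n) in βω F-converging to a point of βω. -/
import Mathlib

open Set Filter Topology Classical

/-- Characteristic-function embedding of `𝒫(ω)` into the Cantor space `2^ω`. -/
noncomputable def chiFun (A : Set ℕ) : ℕ → Bool := fun n => decide (n ∈ A)

lemma chiFun_setOf (f : ℕ → Bool) : chiFun {n | f n = true} = f := by
  funext n; simp [chiFun]

lemma mem_image_chiFun {S : Set (Set ℕ)} {f : ℕ → Bool} :
    f ∈ chiFun '' S ↔ {n | f n = true} ∈ S := by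
  constructor
  · rintro ⟨A, hA, rfl⟩
    have : {n | chiFun A n = true} = A := by ext n; simp [chiFun]
    rwa [this]
  · intro h; exact ⟨_, h, chiFun_setOf f⟩

/-- An "ultrafilter-like" family of subsets of ℕ (complement-dual, all members infinite)
cannot be an Fσ subset of Cantor space. -/
lemma not_fsigma_ultra (G : Set (Set ℕ))
    (hdual : ∀ T : Set ℕ, Tᶜ ∈ G ↔ T ∉ G)
    (hinf : ∀ T ∈ G, T.Infinite)
    (D : ℕ → Set (ℕ → Bool)) (hD : ∀ k, IsClosed (D k))
    (hUD : ⋃ k, D k = chiFun '' G) : False := by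
  -- the flip homeomorphism
  set c : (ℕ → Bool) → (ℕ → Bool) := fun f n => !(f n) with hc
  have hccont : Continuous c := by
    apply continuous_pi
    intro n
    exact Continuous.comp (continuous_of_discreteTopology (f := fun b : Bool => !b)) (continuous_apply n)
  have hcinv : ∀ f, c (c f) = f := by intro f; funext n; simp [hc]
  -- if some D k has nonempty interior, contradiction
  have key : ∀ k, (interior (D k)).Nonempty → False := by
    intro k ⟨f₀, hf₀⟩
    have hop : IsOpen (interior (D k)) := isOpen_interior
    obtain ⟨I, u, hIu, hpi⟩ := isOpen_pi_iff.mp hop f₀ hf₀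
    set g : ℕ → Bool := fun n => if n ∈ I then f₀ n else false with hg
    have hgmem : g ∈ (↑I : Set ℕ).pi u := by
      intro i hi
      simp only [Finset.mem_coe] at hi
      have : g i = f₀ i := by simp [hg, hi]
      rw [this]; exact (hIu i hi).2
    have : g ∈ chiFun '' G := by
      rw [← hUD]
      exact mem_iUnion.mpr ⟨k, interior_subset (hpi hgmem)⟩
    have hTg : {n | g n = true} ∈ G := mem_image_chiFun.mp this
    have hfin : {n | g n = true}.Finite := by
      apply (I.finite_toSet).subset
      intro n hn
      simp only [mem_setOf_eq, hg] at hn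
      by_contra hnI
      rw [Finset.mem_coe] at hnI
      rw [if_neg hnI] at hn
      exact Bool.false_ne_true hn
    exact (hinf _ hTg) hfin
  -- cover the whole space by the D k and their flips
  set E : ℕ × Bool → Set (ℕ → Bool) := fun p => if p.2 then D p.1 else c ⁻¹' (D p.1) with hE
  have hEclosed : ∀ p, IsClosed (E p) := by
    rintro ⟨k, b⟩
    cases b
    · exact (hD k).preimage hccont
    · exact hD k
  have hEuniv : ⋃ p, E p = univ := by
    apply eq_univ_of_forall
    intro f
    by_cases hf : {n | f n = true} ∈ G
    · have : f ∈ chiFun '' G := mem_image_chiFun.mpr hf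
      rw [← hUD] at this
      obtain ⟨k, hk⟩ := mem_iUnion.mp this
      exact mem_iUnion.mpr ⟨(k, true), hk⟩
    · have hfc : {n | f n = true}ᶜ ∈ G := (hdual _).mpr hf
      have hcf : c f ∈ chiFun '' G := by
        rw [mem_image_chiFun]
        have : {n | c f n = true} = {n | f n = true}ᶜ := by
          ext n; simp [hc]
        rwa [this]
      rw [← hUD] at hcf
      obtain ⟨k, hk⟩ := mem_iUnion.mp hcf
      exact mem_iUnion.mpr ⟨(k, false), hk⟩
  obtain ⟨⟨k, b⟩, hint⟩ := nonempty_interior_of_iUnion_of_closed hEclosed hEuniv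
  cases b
  · -- flipped piece: transport to D k
    obtain ⟨f₀, hf₀⟩ := hint
    apply key k
    refine ⟨c f₀, ?_⟩
    have hopen : IsOpen (c ⁻¹' interior (E (k, false))) := isOpen_interior.preimage hccont
    have hsub : c ⁻¹' interior (E (k, false)) ⊆ D k := by
      intro f hf
      have : c f ∈ E (k, false) := interior_subset hf
      simpa [hE, hcinv] using this
    apply interior_maximal hsub hopen
    simp only [mem_preimage, hcinv]
    exact hf₀
  · exact key k (by simpa [hE] using hint)

/-- Compactness: if every member of a closed set `C ⊆ 2^ω` (viewed as a set of subsets of ℕ)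
meets `A`, then some finite `t ⊆ A` meets every member of `C`. -/
lemma hitting_finset (C : Set (ℕ → Bool)) (hC : IsClosed C) (A : Set ℕ)
    (hA : ∀ f ∈ C, ({n | f n = true} ∩ A).Nonempty) :
    ∃ t : Finset ℕ, ↑t ⊆ A ∧ ∀ f ∈ C, ∃ n ∈ t, f n = true := by
  by_contra hcon
  push_neg at hcon
  -- family of closed sets
  set K : Finset ℕ → Set (ℕ → Bool) :=
    fun t => {f ∈ C | ∀ n ∈ t, n ∈ A → f n = false} with hK
  have hKclosed : ∀ t, IsClosed (K t) := by
    intro t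
    have : K t = C ∩ ⋂ n ∈ t, ⋂ (_ : n ∈ A), (fun f : ℕ → Bool => f n) ⁻¹' {false} := by
      ext f; simp [hK]
    rw [this]
    exact hC.inter (isClosed_biInter fun n _ => isClosed_iInter fun _ =>
      (isClosed_discrete {false}).preimage (continuous_apply n))
  have hKne : ∀ t, (K t).Nonempty := by
    intro t
    obtain ⟨f, hfC, hf⟩ := hcon (t.filter (· ∈ A)) (by intro n hn; simpa using (Finset.mem_filter.mp hn).2)
    refine ⟨f, hfC, ?_⟩
    intro n hn hnA
    have : n ∉ t.filter (· ∈ A) → False → _ := fun _ _ => trivial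
    by_cases hft : f n = true
    · exact absurd (hf n (Finset.mem_filter.mpr ⟨hn, hnA⟩)) (by simp [hft])
    · simpa using hft
  have hdir : Directed (fun x1 x2 => x1 ⊇ x2) K := by
    intro t s
    refine ⟨t ∪ s, ?_, ?_⟩
    · intro f hf; exact ⟨hf.1, fun n hn hnA => hf.2 n (Finset.mem_union_left _ hn) hnA⟩
    · intro f hf; exact ⟨hf.1, fun n hn hnA => hf.2 n (Finset.mem_union_right _ hn) hnA⟩
  have hne := IsCompact.nonempty_iInter_of_directed_nonempty_isCompact_isClosed K hdir hKne
    (fun t => (hKclosed t).isCompact) hKclosed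
  obtain ⟨f, hf⟩ := hne
  have hfC : f ∈ C := (mem_iInter.mp hf ∅).1
  obtain ⟨n, hfn, hnA⟩ := hA f hfC
  have := (mem_iInter.mp hf {n}).2 n (Finset.mem_singleton_self n) hnA
  rw [mem_setOf_eq] at hfn
  simp [hfn] at this

lemma step_ex (F : Filter ℕ) (hfree : Filter.cofinite ≤ F)
    (x : ℕ → Ultrafilter ℕ) (hinj : Function.Injective x) (U : Ultrafilter ℕ)
    (htend : Filter.Tendsto x F (𝓝 U))
    (P : ℕ → Set ℕ) (hP : ∀ n, x n ≠ U → P n ∈ x n ∧ P n ∉ U)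
    (W : ℕ → ℕ → Set ℕ) (hW : ∀ n m, n ≠ m → W n m ∈ x n ∧ (W n m)ᶜ ∈ x m)
    (Ck : Set (ℕ → Bool)) (hCk : IsClosed Ck) (hCkF : ∀ f ∈ Ck, {n | f n = true} ∈ F)
    (s : Finset ℕ) (B : ℕ → Set ℕ)
    (hInv1 : ∀ n ∈ s, B n ∈ x n) (hInv2 : ∀ n ∈ s, B n ∉ U)
    (hInv3 : ∀ n ∈ s, ∀ m ∈ s, n ≠ m → B n ∩ B m = ∅) :
    ∃ (s' : Finset ℕ) (B' : ℕ → Set ℕ),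
      (∀ n ∈ s', B' n ∈ x n) ∧ (∀ n ∈ s', B' n ∉ U) ∧
      (∀ n ∈ s', ∀ m ∈ s', n ≠ m → B' n ∩ B' m = ∅) ∧
      s ⊆ s' ∧ s.card < s'.card ∧ (∀ n ∈ s, B' n = B n) ∧
      (∀ f ∈ Ck, ∃ n ∈ s', f n = true) := by
  set D : Set ℕ := (⋃ n ∈ (↑s : Set ℕ), B n)ᶜ with hD
  have hDmem : D ∈ U := by
    rw [hD, Ultrafilter.compl_mem_iff_notMem,
      Ultrafilter.finite_biUnion_mem_iff s.finite_toSet]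
    rintro ⟨n, hn, hBn⟩
    exact hInv2 n (Finset.mem_coe.mp hn) hBn
  have hGF : {n | D ∈ x n} ∈ F :=
    htend ((ultrafilter_isOpen_basic D).mem_nhds hDmem)
  have hbadfin : {n | x n = U}.Finite :=
    Set.Subsingleton.finite (fun a ha b hb => hinj (ha.trans hb.symm))
  have hmemF_inf : ∀ S ∈ F, S.Infinite := by
    intro S hS
    have h1 : Sᶜ.Finite := hfree hS
    have := h1.infinite_compl
    rwa [compl_compl] at this
  set A : Set ℕ := {n | D ∈ x n} \ (↑s ∪ {n | x n = U}) with hA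
  have hAinf : A.Infinite := (hmemF_inf _ hGF).diff (s.finite_toSet.union hbadfin)
  have hit : ∀ f ∈ Ck, ({n | f n = true} ∩ A).Nonempty := by
    intro f hf
    have h1 : {n | f n = true} ∩ {n | D ∈ x n} ∈ F := inter_mem (hCkF f hf) hGF
    obtain ⟨n, ⟨hn1, hn2⟩, hn3⟩ :=
      ((hmemF_inf _ h1).diff (s.finite_toSet.union hbadfin)).nonempty
    exact ⟨n, hn1, hn2, hn3⟩
  obtain ⟨t, htA, hthit⟩ := hitting_finset Ck hCk A hit
  obtain ⟨m₀, hm₀⟩ := hAinf.nonempty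
  set u : Finset ℕ := insert m₀ t with hu
  have huA : ∀ n ∈ u, n ∈ A := by
    intro n hn
    rcases Finset.mem_insert.mp hn with rfl | h
    · exact hm₀
    · exact htA h
  have huD : ∀ n ∈ u, D ∈ x n := fun n hn => (huA n hn).1
  have hus : ∀ n ∈ u, n ∉ s := fun n hn hns =>
    (huA n hn).2 (Or.inl (Finset.mem_coe.mpr hns))
  have huU : ∀ n ∈ u, x n ≠ U := fun n hn h => (huA n hn).2 (Or.inr h)
  set newB : ℕ → Set ℕ :=
    fun n => (D ∩ P n) ∩ ⋂ m ∈ u.erase n, (W n m ∩ (W m n)ᶜ) with hnewB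
  set B' : ℕ → Set ℕ := fun n => if n ∈ u then newB n else B n with hB'
  refine ⟨s ∪ u, B', ?_, ?_, ?_, Finset.subset_union_left, ?_, ?_, ?_⟩
  · -- membership
    intro n hn
    by_cases h : n ∈ u
    · rw [hB']; simp only [if_pos h]
      refine inter_mem (inter_mem (huD n h) (hP n (huU n h)).1) ?_
      rw [biInter_finset_mem]
      intro m hm
      have hmn : m ≠ n := Finset.ne_of_mem_erase hm
      exact inter_mem (hW n m hmn.symm).1 (hW m n hmn).2
    · have hns : n ∈ s := by
        rcases Finset.mem_union.mp hn with h' | h'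
        · exact h'
        · exact absurd h' h
      rw [hB']; simp only [if_neg h]
      exact hInv1 n hns
  · -- not in U
    intro n hn
    by_cases h : n ∈ u
    · rw [hB']; simp only [if_pos h]
      intro hmem
      exact (hP n (huU n h)).2 (mem_of_superset hmem
        (Set.inter_subset_left.trans Set.inter_subset_right))
    · have hns : n ∈ s := by
        rcases Finset.mem_union.mp hn with h' | h'
        · exact h'
        · exact absurd h' h
      rw [hB']; simp only [if_neg h]
      exact hInv2 n hns
  · -- disjoint
    intro n hn m hm hnm
    rw [Set.eq_empty_iff_forall_notMem]
    rintro a ⟨han, ham⟩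
    by_cases h1 : n ∈ u <;> by_cases h2 : m ∈ u
    · rw [hB'] at han ham
      simp only [if_pos h1] at han
      simp only [if_pos h2] at ham
      have hmn : m ∈ u.erase n := Finset.mem_erase.mpr ⟨hnm.symm, h2⟩
      have hnm' : n ∈ u.erase m := Finset.mem_erase.mpr ⟨hnm, h1⟩
      have h3 : a ∈ W n m := (Set.mem_iInter₂.mp han.2 m hmn).1
      have h4 : a ∈ (W n m)ᶜ := (Set.mem_iInter₂.mp ham.2 n hnm').2
      exact h4 h3
    · have hms : m ∈ s := by
        rcases Finset.mem_union.mp hm with h' | h'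
        · exact h'
        · exact absurd h' h2
      rw [hB'] at han ham
      simp only [if_pos h1] at han
      simp only [if_neg h2] at ham
      have haD : a ∈ D := han.1.1
      exact haD (Set.mem_biUnion (Finset.mem_coe.mpr hms) ham)
    · have hns : n ∈ s := by
        rcases Finset.mem_union.mp hn with h' | h'
        · exact h'
        · exact absurd h' h1
      rw [hB'] at han ham
      simp only [if_neg h1] at han
      simp only [if_pos h2] at ham
      have haD : a ∈ D := ham.1.1
      exact haD (Set.mem_biUnion (Finset.mem_coe.mpr hns) han)
    · have hns : n ∈ s := by
        rcases Finset.mem_union.mp hn with h' | h'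
        · exact h'
        · exact absurd h' h1
      have hms : m ∈ s := by
        rcases Finset.mem_union.mp hm with h' | h'
        · exact h'
        · exact absurd h' h2
      rw [hB'] at han ham
      simp only [if_neg h1] at han
      simp only [if_neg h2] at ham
      have := hInv3 n hns m hms hnm
      rw [Set.eq_empty_iff_forall_notMem] at this
      exact this a ⟨han, ham⟩
  · -- card
    refine Finset.card_lt_card ⟨Finset.subset_union_left, fun hsub => ?_⟩
    exact hus m₀ (Finset.mem_insert_self _ _)
      (hsub (Finset.mem_union_right _ (Finset.mem_insert_self _ _)))
  · -- coherence
    intro n hn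
    rw [hB']; simp only [if_neg (fun h => hus n h hn)]
  · -- hitting
    intro f hf
    obtain ⟨n, hn, hfn⟩ := hthit f hf
    exact ⟨n, Finset.mem_union_right _ (Finset.mem_insert_of_mem hn), hfn⟩

/-- no free `F_σ` filter on `ω` admits an injective `F`-convergent sequence
in `βω` (realized as the space of ultrafilters on `ℕ`). -/
theorem stmt14 (F : Filter ℕ) (hfree : Filter.cofinite ≤ F)
    (hFσ : ∃ C : ℕ → Set (ℕ → Bool), (∀ n, IsClosed (C n)) ∧
      chiFun '' {A : Set ℕ | A ∈ F} = ⋃ n, C n) :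
    ¬∃ (x : ℕ → Ultrafilter ℕ) (xlim : Ultrafilter ℕ),
      Function.Injective x ∧ Filter.Tendsto x F (𝓝 xlim) := by
  obtain ⟨C, hC, hCF⟩ := hFσ
  rintro ⟨x, U, hinj, htend⟩
  -- choose witnesses separating the x n from U and from each other
  have hPex : ∀ n, ∃ S, x n ≠ U → (S ∈ x n ∧ S ∉ U) := by
    intro n
    by_cases h : x n = U
    · exact ⟨∅, fun h' => absurd h h'⟩
    · have hle : ¬ (U : Filter ℕ) ≤ (x n : Filter ℕ) := by
        intro hle
        exact h (Ultrafilter.coe_le_coe.mp hle).symm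
      rw [Filter.le_def] at hle
      push_neg at hle
      obtain ⟨S, hSx, hSU⟩ := hle
      exact ⟨S, fun _ => ⟨hSx, hSU⟩⟩
  have hWex : ∀ n m, ∃ S, n ≠ m → (S ∈ x n ∧ Sᶜ ∈ x m) := by
    intro n m
    by_cases h : n = m
    · exact ⟨∅, fun h' => absurd h h'⟩
    · have hle : ¬ (x m : Filter ℕ) ≤ (x n : Filter ℕ) := by
        intro hle
        exact h (hinj (Ultrafilter.coe_le_coe.mp hle)).symm
      rw [Filter.le_def] at hle
      push_neg at hle
      obtain ⟨S, hSx, hSm⟩ := hle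
      exact ⟨S, fun _ => ⟨hSx, Ultrafilter.compl_mem_iff_notMem.mpr hSm⟩⟩
  choose P hP using hPex
  choose W hW using hWex
  have hCkF : ∀ k, ∀ f ∈ C k, {n | f n = true} ∈ F := by
    intro k f hf
    have : f ∈ chiFun '' {A : Set ℕ | A ∈ F} := by
      rw [hCF]; exact mem_iUnion.mpr ⟨k, hf⟩
    exact mem_image_chiFun.mp this
  -- the recursive construction
  have hstep : ∀ (k : ℕ) (p : Finset ℕ × (ℕ → Set ℕ)), ∃ p' : Finset ℕ × (ℕ → Set ℕ),
      ((∀ n ∈ p.1, p.2 n ∈ x n) ∧ (∀ n ∈ p.1, p.2 n ∉ U) ∧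
        (∀ n ∈ p.1, ∀ m ∈ p.1, n ≠ m → p.2 n ∩ p.2 m = ∅)) →
      (((∀ n ∈ p'.1, p'.2 n ∈ x n) ∧ (∀ n ∈ p'.1, p'.2 n ∉ U) ∧
        (∀ n ∈ p'.1, ∀ m ∈ p'.1, n ≠ m → p'.2 n ∩ p'.2 m = ∅)) ∧
        p.1 ⊆ p'.1 ∧ p.1.card < p'.1.card ∧
        (∀ n ∈ p.1, p'.2 n = p.2 n) ∧ ∀ f ∈ C k, ∃ n ∈ p'.1, f n = true) := by
    intro k p
    by_cases h : (∀ n ∈ p.1, p.2 n ∈ x n) ∧ (∀ n ∈ p.1, p.2 n ∉ U) ∧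
        (∀ n ∈ p.1, ∀ m ∈ p.1, n ≠ m → p.2 n ∩ p.2 m = ∅)
    · obtain ⟨s', B', h1, h2, h3, h4, h5, h6, h7⟩ :=
        step_ex F hfree x hinj U htend P hP W hW (C k) (hC k) (hCkF k) p.1 p.2
          h.1 h.2.1 h.2.2
      exact ⟨(s', B'), fun _ => ⟨⟨h1, h2, h3⟩, h4, h5, h6, h7⟩⟩
    · exact ⟨p, fun h' => absurd h' h⟩
  choose nxt hnxt using hstep
  set g : ℕ → Finset ℕ × (ℕ → Set ℕ) :=
    fun k => Nat.rec (motive := fun _ => Finset ℕ × (ℕ → Set ℕ))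
      (⟨∅, fun _ => ∅⟩) nxt k with hgdef
  have hgsucc : ∀ k, g (k+1) = nxt k (g k) := fun _ => rfl
  have hInvk : ∀ k, (∀ n ∈ (g k).1, (g k).2 n ∈ x n) ∧ (∀ n ∈ (g k).1, (g k).2 n ∉ U) ∧
      (∀ n ∈ (g k).1, ∀ m ∈ (g k).1, n ≠ m → (g k).2 n ∩ (g k).2 m = ∅) := by
    intro k
    induction k with
    | zero =>
      refine ⟨fun n hn => absurd hn (Finset.notMem_empty n),
        fun n hn => absurd hn (Finset.notMem_empty n),
        fun n hn => absurd hn (Finset.notMem_empty n)⟩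
    | succ k ih =>
      rw [hgsucc]
      exact (hnxt k (g k) ih).1
  have hspec : ∀ k, (g k).1 ⊆ (g (k+1)).1 ∧ (g k).1.card < (g (k+1)).1.card ∧
      (∀ n ∈ (g k).1, (g (k+1)).2 n = (g k).2 n) ∧
      (∀ f ∈ C k, ∃ n ∈ (g (k+1)).1, f n = true) := by
    intro k
    rw [hgsucc]
    exact (hnxt k (g k) (hInvk k)).2
  have hmono : ∀ j k, j ≤ k → (g j).1 ⊆ (g k).1 := by
    intro j k hjk
    induction k, hjk using Nat.le_induction with
    | base => exact Finset.Subset.refl _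
    | succ k hk ih => exact ih.trans (hspec k).1
  have hcoh : ∀ j k, j ≤ k → ∀ n ∈ (g j).1, (g k).2 n = (g j).2 n := by
    intro j k hjk
    induction k, hjk using Nat.le_induction with
    | base => intro n _; rfl
    | succ k hk ih =>
      intro n hn
      rw [(hspec k).2.2.1 n (hmono j k hk hn)]
      exact ih n hn
  have hcard : ∀ k, k ≤ (g k).1.card := by
    intro k
    induction k with
    | zero => exact Nat.zero_le _
    | succ k ih => exact Nat.lt_of_le_of_lt ih (hspec k).2.1
  set Ainf : Set ℕ := ⋃ k, ((g k).1 : Set ℕ) with hAdef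
  set Binf : ℕ → Set ℕ :=
    fun n => if h : ∃ k, n ∈ (g k).1 then (g (Nat.find h)).2 n else ∅ with hBdef
  have hmemA : ∀ n, n ∈ Ainf ↔ ∃ k, n ∈ (g k).1 := by
    intro n
    rw [hAdef, mem_iUnion]
    simp only [Finset.mem_coe]
  have hBeq : ∀ k, ∀ n ∈ (g k).1, Binf n = (g k).2 n := by
    intro k n hn
    have h : ∃ k, n ∈ (g k).1 := ⟨k, hn⟩
    rw [hBdef]
    simp only [dif_pos h]
    exact (hcoh (Nat.find h) k (Nat.find_min' h hn) n (Nat.find_spec h)).symm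
  have hBx : ∀ n ∈ Ainf, Binf n ∈ x n := by
    intro n hn
    obtain ⟨k, hk⟩ := (hmemA n).mp hn
    rw [hBeq k n hk]
    exact (hInvk k).1 n hk
  have hdisj : ∀ n ∈ Ainf, ∀ m ∈ Ainf, n ≠ m → Binf n ∩ Binf m = ∅ := by
    intro n hn m hm hnm
    obtain ⟨k1, hk1⟩ := (hmemA n).mp hn
    obtain ⟨k2, hk2⟩ := (hmemA m).mp hm
    have h1 : n ∈ (g (max k1 k2)).1 := hmono k1 _ (le_max_left _ _) hk1
    have h2 : m ∈ (g (max k1 k2)).1 := hmono k2 _ (le_max_right _ _) hk2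
    rw [hBeq _ n h1, hBeq _ m h2]
    exact (hInvk _).2.2 n h1 m h2 hnm
  have hAinf : Ainf.Infinite := by
    intro hfin
    have hsub : (g (hfin.toFinset.card + 1)).1 ⊆ hfin.toFinset := by
      intro n hn
      rw [Set.Finite.mem_toFinset]
      exact (hmemA n).mpr ⟨hfin.toFinset.card + 1, hn⟩
    have h1 := Finset.card_le_card hsub
    have h2 := hcard (hfin.toFinset.card + 1)
    omega
  have hApos : ∀ S ∈ F, (S ∩ Ainf).Nonempty := by
    intro S hS
    have : chiFun S ∈ ⋃ k, C k := by
      rw [← hCF]; exact ⟨S, hS, rfl⟩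
    obtain ⟨k, hk⟩ := mem_iUnion.mp this
    obtain ⟨n, hn, hfn⟩ := (hspec k).2.2.2 (chiFun S) hk
    have hnS : n ∈ S := by simpa [chiFun] using hfn
    exact ⟨n, hnS, (hmemA n).mpr ⟨k+1, hn⟩⟩
  -- the induced ultrafilter-like family
  have hAc : Ainfᶜ ∉ F := by
    intro h
    obtain ⟨n, hn1, hn2⟩ := hApos _ h
    exact hn1 hn2
  have hdec : ∀ T : Set ℕ, (T ∪ Ainfᶜ ∈ F) ∨ (Tᶜ ∪ Ainfᶜ ∈ F) := by
    intro T
    set BS : Set ℕ := ⋃ n ∈ T ∩ Ainf, Binf n with hBS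
    by_cases hU : BS ∈ U
    · left
      have hx : {n | BS ∈ x n} ∈ F := htend ((ultrafilter_isOpen_basic BS).mem_nhds hU)
      refine mem_of_superset hx ?_
      intro n hn
      rw [Set.mem_union]
      by_contra hcon
      push_neg at hcon
      obtain ⟨hnT, hnA⟩ := hcon
      rw [Set.notMem_compl_iff] at hnA
      have hdisj2 : Binf n ∩ BS = ∅ := by
        rw [Set.eq_empty_iff_forall_notMem]
        rintro a ⟨ha1, ha2⟩
        obtain ⟨m, hm, ha3⟩ := Set.mem_iUnion₂.mp ha2
        have hnm : n ≠ m := fun he => hnT (he ▸ hm.1)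
        have hd := hdisj n hnA m hm.2 hnm
        rw [Set.eq_empty_iff_forall_notMem] at hd
        exact hd a ⟨ha1, ha3⟩
      have hmem : (∅ : Set ℕ) ∈ x n := by
        rw [← hdisj2]
        exact inter_mem (hBx n hnA) hn
      exact Filter.empty_notMem (x n : Filter ℕ) hmem
    · right
      have hUc : BSᶜ ∈ U := Ultrafilter.compl_mem_iff_notMem.mpr hU
      have hx : {n | BSᶜ ∈ x n} ∈ F := htend ((ultrafilter_isOpen_basic BSᶜ).mem_nhds hUc)
      refine mem_of_superset hx ?_
      intro n hn
      rw [Set.mem_union]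
      by_contra hcon
      push_neg at hcon
      obtain ⟨hnT, hnA⟩ := hcon
      rw [Set.notMem_compl_iff] at hnA
      have hnT' : n ∈ T := by simpa using hnT
      have hsubBS : Binf n ⊆ BS := Set.subset_biUnion_of_mem (show n ∈ T ∩ Ainf from ⟨hnT', hnA⟩)
      have hdisj2 : Binf n ∩ BSᶜ = ∅ := by
        rw [Set.eq_empty_iff_forall_notMem]
        rintro a ⟨ha1, ha2⟩
        exact ha2 (hsubBS ha1)
      have hmem : (∅ : Set ℕ) ∈ x n := by
        rw [← hdisj2]
        exact inter_mem (hBx n hnA) hn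
      exact Filter.empty_notMem (x n : Filter ℕ) hmem
  have hdual : ∀ T : Set ℕ, (Tᶜ ∪ Ainfᶜ ∈ F) ↔ ¬ (T ∪ Ainfᶜ ∈ F) := by
    intro T
    constructor
    · intro h1 h2
      have h3 := inter_mem h2 h1
      have h4 : (T ∪ Ainfᶜ) ∩ (Tᶜ ∪ Ainfᶜ) = Ainfᶜ := by
        ext a
        simp only [Set.mem_inter_iff, Set.mem_union, Set.mem_compl_iff]
        tauto
      rw [h4] at h3
      exact hAc h3
    · intro h
      rcases hdec T with h' | h'
      · exact absurd h' h
      · exact h'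
  have hinfG : ∀ T : Set ℕ, T ∪ Ainfᶜ ∈ F → T.Infinite := by
    intro T hT
    have h1 : (T ∪ Ainfᶜ)ᶜ.Finite := hfree hT
    have h2 : (T ∪ Ainfᶜ)ᶜ = Ainf \ T := by
      ext a
      simp only [Set.mem_compl_iff, Set.mem_union, Set.mem_diff]
      tauto
    rw [h2] at h1
    have h3 : (Ainf \ (Ainf \ T)).Infinite := hAinf.diff h1
    have h4 : Ainf \ (Ainf \ T) ⊆ T := by
      intro a ha
      simp only [Set.mem_diff, not_and, not_not] at ha
      exact ha.2 ha.1
    exact Set.Infinite.mono h4 h3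
  -- Fσ structure of the trace family, and the final contradiction
  set h2 : (ℕ → Bool) → (ℕ → Bool) := fun f n => f n || !(decide (n ∈ Ainf)) with hh2
  have hcont : Continuous h2 := by
    apply continuous_pi
    intro n
    exact Continuous.comp
      (continuous_of_discreteTopology (f := fun b : Bool => b || !(decide (n ∈ Ainf))))
      (continuous_apply n)
  set G : Set (Set ℕ) := {T | T ∪ Ainfᶜ ∈ F} with hGdef
  have hmemG : ∀ T : Set ℕ, T ∈ G ↔ T ∪ Ainfᶜ ∈ F := fun T => Iff.rfl
  have himg : chiFun '' G = ⋃ k, h2 ⁻¹' (C k) := by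
    ext f
    rw [mem_image_chiFun, hmemG]
    have key : {n | h2 f n = true} = {n | f n = true} ∪ Ainfᶜ := by
      ext n
      simp only [Set.mem_setOf_eq, Set.mem_union, Set.mem_compl_iff, hh2,
        Bool.or_eq_true, Bool.not_eq_true', decide_eq_false_iff_not]
    constructor
    · intro hT
      have hmem : h2 f ∈ chiFun '' {A : Set ℕ | A ∈ F} :=
        mem_image_chiFun.mpr (by rw [key]; exact hT)
      rw [hCF] at hmem
      obtain ⟨k, hk⟩ := mem_iUnion.mp hmem
      exact mem_iUnion.mpr ⟨k, hk⟩
    · intro hf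
      obtain ⟨k, hk⟩ := mem_iUnion.mp hf
      have hmem : h2 f ∈ ⋃ k, C k := mem_iUnion.mpr ⟨k, hk⟩
      rw [← hCF] at hmem
      have := mem_image_chiFun.mp hmem
      rwa [key] at this
  exact not_fsigma_ultra G (fun T => (hdual T).trans (not_iff_not.mpr (hmemG T)).symm)
    (fun T hT => hinfG T ((hmemG T).mp hT))
    (fun k => h2 ⁻¹' (C k)) (fun k => (hC k).preimage hcont) himg.symm
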